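/- Higher-weight partial-fraction decomposition with constants in the prime field: let N ≥ 2 and let α, β ≥ 1 be integers with N = α + β. There exists a family of constants c_{I,k} ∈ 𝔽_p, indexed by the subsets I ⊆ Σ and the integers 1 ≤ k ≤ N, such that for every family (x_i)_{i∈Σ} of elements of L and every z ∈ L ∖ 𝔽_q: Σ_{(μ,ν)∈𝔽_q×𝔽_q, μ≠ν} [∏_{i∈U}(x_i+μ) · ∏_{j∈V}(x_j+ν)] / [(z+μ)^α (z+ν)^β] = Σ_{I⊆Σ} Σ_{k=1}^{N} c_{I,k} · Σ_{μ∈𝔽_q} [∏_{i∈I}(x_i+μ)] / (z+μ)^k. -/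

import Mathlib

set_option linter.unusedSectionVars false

open Finset Polynomial

lemma pf_step {K : Type*} [Field K] {w1 w2 : K} (hw1 : w1 ≠ 0) (hw2 : w2 ≠ 0)
    (hd : w2 - w1 ≠ 0) (P : K) (a b s : ℕ) :
    P * ((w2 - w1)⁻¹) ^ s / (w1 ^ (a+1) * w2 ^ (b+1))
      = P * ((w2 - w1)⁻¹) ^ (s+1) / (w1 ^ (a+1) * w2 ^ b)
        - P * ((w2 - w1)⁻¹) ^ (s+1) / (w1 ^ a * w2 ^ (b+1)) := by
  have key : (w1 ^ (a+1) * w2 ^ b)⁻¹ - (w1 ^ a * w2 ^ (b+1))⁻¹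
      = (w2 - w1) / (w1 ^ (a+1) * w2 ^ (b+1)) := by
    field_simp
    ring
  have hu : ((w2 - w1)⁻¹) ^ (s+1) * (w2 - w1) = ((w2 - w1)⁻¹) ^ s := by
    rw [pow_succ, mul_assoc, inv_mul_cancel₀ hd, mul_one]
  calc P * ((w2 - w1)⁻¹) ^ s / (w1 ^ (a+1) * w2 ^ (b+1))
      = P * (((w2 - w1)⁻¹) ^ (s+1) * (w2 - w1)) / (w1 ^ (a+1) * w2 ^ (b+1)) := by rw [hu]
    _ = P * ((w2 - w1)⁻¹) ^ (s+1) * ((w2 - w1) / (w1 ^ (a+1) * w2 ^ (b+1))) := by ring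
    _ = P * ((w2 - w1)⁻¹) ^ (s+1) * ((w1 ^ (a+1) * w2 ^ b)⁻¹ - (w1 ^ a * w2 ^ (b+1))⁻¹) := by
        rw [key]
    _ = _ := by rw [mul_sub, div_eq_mul_inv, div_eq_mul_inv]

namespace Stmt6Aux

lemma charF {F : Type*} [Field F] [Fintype F] {p e : ℕ} (hp : p.Prime) (he : 0 < e)
    (hF : Fintype.card F = p ^ e) : CharP F p := by
  have h0 : ((p : F)) ^ e = 0 := by
    have := FiniteField.cast_card_eq_zero F
    rw [hF] at this
    push_cast at this
    exact this
  have hp0 : (p : F) = 0 := pow_eq_zero_iff he.ne' |>.mp h0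
  have hdvd : ringChar F ∣ p := (ringChar.spec F p).mp hp0
  have hr := (Nat.Prime.eq_one_or_self_of_dvd hp _ hdvd).resolve_left (CharP.ringChar_ne_one)
  rw [← hr]
  exact ringChar.charP F

lemma natCast_of_pow_eq {F : Type*} [Field F] [Fintype F] [DecidableEq F] {p : ℕ}
    (hp : p.Prime) [CharP F p] {c : F} (hc : c ^ p = c) : ∃ n : ℕ, (n : F) = c := by
  haveI : Fact p.Prime := ⟨hp⟩
  set f : F[X] := X ^ p - X with hf
  have hdeg : f.natDegree = p := by
    rw [hf]
    rw [natDegree_sub_eq_left_of_natDegree_lt] <;>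
      simp [natDegree_X_pow, hp.one_lt]
  have hf0 : f ≠ 0 := fun h => hp.ne_zero (by simpa [h] using hdeg.symm)
  set T : Finset F := (Finset.range p).image (Nat.cast) with hT
  have hTcard : T.card = p := by
    rw [hT, Finset.card_image_of_injOn, Finset.card_range]
    exact fun a ha b hb hab => CharP.natCast_injOn_Iio F p
      (by simpa using Finset.mem_range.mp ha) (by simpa using Finset.mem_range.mp hb) hab
  have hroot : ∀ y : F, y ^ p = y → y ∈ f.roots.toFinset := by
    intro y hy
    rw [Multiset.mem_toFinset, mem_roots hf0]
    simp [f, IsRoot, hy]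
  have hsub : T ⊆ f.roots.toFinset := by
    intro y hy
    rw [hT, Finset.mem_image] at hy
    obtain ⟨n, hn, rfl⟩ := hy
    apply hroot
    have : (n : F) ^ p = ((n ^ p : ℕ) : F) := by push_cast; ring
    rw [this]
    have hmod : n ^ p ≡ n [MOD p] := by
      have := ZMod.pow_card (n : ZMod p)
      rwa [← Nat.cast_pow, ZMod.natCast_eq_natCast_iff] at this
    exact (CharP.natCast_eq_natCast F p).mpr hmod
  have hle : f.roots.toFinset.card ≤ p := by
    calc f.roots.toFinset.card ≤ Multiset.card f.roots := Multiset.toFinset_card_le _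
    _ ≤ f.natDegree := f.card_roots'
    _ = p := hdeg
  have heq : T = f.roots.toFinset := Finset.eq_of_subset_of_card_le hsub (by omega)
  have hc' : c ∈ T := heq ▸ hroot c hc
  rw [hT, Finset.mem_image] at hc'
  obtain ⟨n, _, hn⟩ := hc'
  exact ⟨n, hn⟩

end Stmt6Aux

namespace Stmt6Aux

section Main

variable {F L ι : Type*} [Field F] [Fintype F] [DecidableEq F]
    [Field L] [Algebra F L] [DecidableEq ι]

noncomputable def econst (F : Type*) [Field F] [Fintype F] [DecidableEq F] (m s : ℕ) (ε : F) : F :=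
  ∑ t ∈ (univ : Finset F).erase 0, t ^ m * ((ε * t)⁻¹) ^ s

lemma econst_natCast {p : ℕ} (hp : p.Prime) [CharP F p] (m s : ℕ) {ε : F} (hε : ε ^ p = ε) :
    ∃ n : ℕ, (n : F) = econst F m s ε := by
  haveI : ExpChar F p := .prime hp
  apply natCast_of_pow_eq hp
  rw [econst, sum_pow_char]
  rw [Finset.sum_bijective (fun t : F => t ^ p)
    ((Finite.injective_iff_bijective).mp (frobenius_inj F p))
    (t := (univ : Finset F).erase 0)
    (g := fun t => t ^ m * ((ε * t)⁻¹) ^ s)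
    (by intro t; simp [pow_eq_zero_iff hp.ne_zero])
    (by
      intro t _
      show (t ^ m * (ε * t)⁻¹ ^ s) ^ p = (t ^ p) ^ m * (ε * (t ^ p))⁻¹ ^ s
      rw [mul_pow, ← pow_mul, ← pow_mul, mul_comm m p, mul_comm s p, pow_mul, pow_mul, inv_pow,
        mul_pow, hε])]

lemma inner_sum (x : ι → L) (W : Finset ι) (μ : F) (s : ℕ) (ε : F) :
    ∑ ν ∈ (univ : Finset F).erase μ,
      (∏ j ∈ W, (x j + algebraMap F L ν)) * ((algebraMap F L (ε * (ν - μ)))⁻¹) ^ s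
    = ∑ J ∈ W.powerset,
        algebraMap F L (econst F (W.card - J.card) s ε) * ∏ j ∈ J, (x j + algebraMap F L μ) := by
  have h1 : ∑ ν ∈ (univ : Finset F).erase μ,
      (∏ j ∈ W, (x j + algebraMap F L ν)) * ((algebraMap F L (ε * (ν - μ)))⁻¹) ^ s
      = ∑ t ∈ (univ : Finset F).erase 0,
      (∏ j ∈ W, ((x j + algebraMap F L μ) + algebraMap F L t)) *
        ((algebraMap F L (ε * t))⁻¹) ^ s := by
    refine (Finset.sum_equiv (Equiv.addLeft μ) (by simp) ?_).symm
    intro t _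
    simp only [Equiv.coe_addLeft]
    rw [add_sub_cancel_left]
    congr 1
    refine Finset.prod_congr rfl fun j _ => ?_
    rw [map_add, add_assoc]
  rw [h1]
  have h2 : ∀ t : F, (∏ j ∈ W, ((x j + algebraMap F L μ) + algebraMap F L t))
      = ∑ J ∈ W.powerset, (∏ j ∈ J, (x j + algebraMap F L μ)) *
          (algebraMap F L t) ^ (W.card - J.card) := by
    intro t
    rw [Finset.prod_add]
    refine Finset.sum_congr rfl fun J hJ => ?_
    rw [Finset.prod_const, Finset.card_sdiff_of_subset (Finset.mem_powerset.mp hJ)]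
  calc ∑ t ∈ (univ : Finset F).erase 0,
      (∏ j ∈ W, ((x j + algebraMap F L μ) + algebraMap F L t)) * ((algebraMap F L (ε * t))⁻¹) ^ s
      = ∑ t ∈ (univ : Finset F).erase 0, ∑ J ∈ W.powerset,
          ((∏ j ∈ J, (x j + algebraMap F L μ)) * (algebraMap F L t) ^ (W.card - J.card)) *
            ((algebraMap F L (ε * t))⁻¹) ^ s := by
        refine Finset.sum_congr rfl fun t _ => ?_
        rw [h2, Finset.sum_mul]
    _ = ∑ J ∈ W.powerset, ∑ t ∈ (univ : Finset F).erase 0,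
          ((∏ j ∈ J, (x j + algebraMap F L μ)) * (algebraMap F L t) ^ (W.card - J.card)) *
            ((algebraMap F L (ε * t))⁻¹) ^ s := Finset.sum_comm
    _ = ∑ J ∈ W.powerset,
        algebraMap F L (econst F (W.card - J.card) s ε) * ∏ j ∈ J, (x j + algebraMap F L μ) := by
        refine Finset.sum_congr rfl fun J _ => ?_
        rw [econst, map_sum, Finset.sum_mul]
        refine Finset.sum_congr rfl fun t _ => ?_
        simp only [map_mul, map_pow, map_inv₀, mul_inv]
        ring


variable (F)

noncomputable def T (x : ι → L) (z : L) (I : Finset ι) (k : ℕ) : L :=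
  ∑ μ : F, (∏ i ∈ I, (x i + algebraMap F L μ)) / (z + algebraMap F L μ) ^ k

def Rep (S : Finset ι) (N : ℕ) (f : (ι → L) → L → L) : Prop :=
  ∃ c : Finset ι → ℕ → ℕ, ∀ x z, z ∉ Set.range (algebraMap F L) →
    f x z = ∑ I ∈ S.powerset, ∑ k ∈ Finset.Icc 1 N, (c I k : L) * T F x z I k

variable {F} {S : Finset ι} {N : ℕ}

lemma rep_congr {f g : (ι → L) → L → L} (hg : Rep F S N g)
    (h : ∀ x z, z ∉ Set.range (algebraMap F L) → f x z = g x z) : Rep F S N f := by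
  obtain ⟨c, hc⟩ := hg
  exact ⟨c, fun x z hz => (h x z hz).trans (hc x z hz)⟩

lemma rep_zero : Rep F S N (fun _ _ => (0 : L)) :=
  ⟨fun _ _ => 0, fun x z _ => by simp⟩

lemma rep_add {f g : (ι → L) → L → L} (hf : Rep F S N f) (hg : Rep F S N g) :
    Rep F S N (fun x z => f x z + g x z) := by
  obtain ⟨c, hc⟩ := hf
  obtain ⟨d, hd⟩ := hg
  refine ⟨fun I k => c I k + d I k, fun x z hz => ?_⟩
  show f x z + g x z = ∑ I ∈ S.powerset, ∑ k ∈ Finset.Icc 1 N, ((c I k + d I k : ℕ) : L) * T F x z I k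
  rw [hc x z hz, hd x z hz, ← Finset.sum_add_distrib]
  refine Finset.sum_congr rfl fun I _ => ?_
  rw [← Finset.sum_add_distrib]
  refine Finset.sum_congr rfl fun k _ => ?_
  push_cast
  ring

lemma rep_neg {p : ℕ} (hp : p.Prime) [CharP L p] {f : (ι → L) → L → L} (hf : Rep F S N f) :
    Rep F S N (fun x z => - f x z) := by
  obtain ⟨c, hc⟩ := hf
  refine ⟨fun I k => (p - 1) * c I k, fun x z hz => ?_⟩
  show - f x z = ∑ I ∈ S.powerset, ∑ k ∈ Finset.Icc 1 N, (((p - 1) * c I k : ℕ) : L) * T F x z I k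
  rw [hc x z hz, ← Finset.sum_neg_distrib]
  refine Finset.sum_congr rfl fun I _ => ?_
  rw [← Finset.sum_neg_distrib]
  refine Finset.sum_congr rfl fun k _ => ?_
  have hL : ((p : ℕ) : L) = 0 := CharP.cast_eq_zero L p
  have h1 : (((p - 1) * c I k : ℕ) : L) = - (c I k : L) := by
    push_cast [Nat.cast_sub hp.one_le]
    rw [hL]
    ring
  rw [h1]
  ring

lemma rep_sub {p : ℕ} (hp : p.Prime) [CharP L p] {f g : (ι → L) → L → L}
    (hf : Rep F S N f) (hg : Rep F S N g) : Rep F S N (fun x z => f x z - g x z) := by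
  have := rep_add hf (rep_neg hp hg)
  exact rep_congr this (fun x z _ => by simp [sub_eq_add_neg])

lemma rep_sum {κ : Type*} {s : Finset κ} {f : κ → (ι → L) → L → L}
    (h : ∀ j ∈ s, Rep F S N (f j)) : Rep F S N (fun x z => ∑ j ∈ s, f j x z) := by
  classical
  induction s using Finset.induction_on with
  | empty => exact rep_congr rep_zero (fun x z _ => by simp)
  | @insert a s' hj ih =>
    have ha := h a (Finset.mem_insert_self a s')
    have hs := ih (fun j hjs => h j (Finset.mem_insert_of_mem hjs))
    exact rep_congr (rep_add ha hs) (fun x z _ => by rw [Finset.sum_insert hj])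

lemma rep_single (n : ℕ) {I : Finset ι} (hI : I ∈ S.powerset) {k : ℕ}
    (hk : k ∈ Finset.Icc 1 N) : Rep F S N (fun x z => (n : L) * T F x z I k) := by
  refine ⟨fun I' k' => if I' = I ∧ k' = k then n else 0, fun x z hz => ?_⟩
  rw [Finset.sum_eq_single_of_mem I hI, Finset.sum_eq_single_of_mem k hk]
  · simp
  · intro k' _ hk'
    simp [hk']
  · intro I' _ hI'
    apply Finset.sum_eq_zero
    intro k' _
    simp [hI']


lemma sum_offDiag_left {M : Type*} [AddCommMonoid M] (f : F × F → M) :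
    ∑ q ∈ (univ : Finset F).offDiag, f q = ∑ μ : F, ∑ ν ∈ (univ : Finset F).erase μ, f (μ, ν) := by
  rw [show (univ : Finset F).offDiag = (univ ×ˢ univ).filter (fun a : F × F => a.1 ≠ a.2) by ext; simp,
    Finset.sum_filter, Finset.sum_product]
  refine Finset.sum_congr rfl fun μ _ => ?_
  rw [← Finset.sum_filter]
  congr 1
  ext ν
  simp [eq_comm, Finset.mem_erase]

lemma sum_offDiag_right {M : Type*} [AddCommMonoid M] (f : F × F → M) :
    ∑ q ∈ (univ : Finset F).offDiag, f q = ∑ ν : F, ∑ μ ∈ (univ : Finset F).erase ν, f (μ, ν) := by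
  rw [show (univ : Finset F).offDiag = (univ ×ˢ univ).filter (fun a : F × F => a.1 ≠ a.2) by ext; simp,
    Finset.sum_filter, Finset.sum_product_right]
  refine Finset.sum_congr rfl fun ν _ => ?_
  rw [← Finset.sum_filter]
  congr 1
  ext μ
  simp [Finset.mem_erase]

variable (F)

noncomputable def G (U V : Finset ι) (a b s : ℕ) (x : ι → L) (z : L) : L :=
  ∑ μν ∈ (univ : Finset F).offDiag,
    ((∏ i ∈ U, (x i + algebraMap F L μν.1)) * ∏ j ∈ V, (x j + algebraMap F L μν.2)) *
        ((algebraMap F L (μν.2 - μν.1))⁻¹) ^ s /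
      ((z + algebraMap F L μν.1) ^ a * (z + algebraMap F L μν.2) ^ b)

variable {F}

lemma z_add_ne {z : L} (hz : z ∉ Set.range (algebraMap F L)) (μ : F) :
    z + algebraMap F L μ ≠ 0 := by
  intro h
  exact hz ⟨-μ, by rw [map_neg]; linear_combination -h⟩

variable {U V : Finset ι}

lemma rep_G_b0 (hdisj : Disjoint U V) (hUV : U ∪ V = S) {p : ℕ} (hp : p.Prime) [CharP F p]
    {a : ℕ} (ha : 1 ≤ a) (haN : a ≤ N) (s : ℕ) : Rep F S N (G F U V a 0 s : (ι → L) → L → L) := by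
  have hex : ∀ J : Finset ι, ∃ n : ℕ, (n : F) = econst F (V.card - J.card) s 1 :=
    fun J => econst_natCast hp _ _ (one_pow p)
  choose n hn using hex
  refine rep_congr (rep_sum (f := fun J x z => (n J : L) * T F x z (U ∪ J) a)
    (s := V.powerset) (fun J hJ => rep_single (n J)
      (Finset.mem_powerset.mpr (hUV ▸ Finset.union_subset_union_right
        (Finset.mem_powerset.mp hJ))) (Finset.mem_Icc.mpr ⟨ha, haN⟩))) ?_
  intro x z hz
  rw [G, sum_offDiag_left]
  have key : ∀ μ : F, ∑ ν ∈ (univ : Finset F).erase μ,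
      ((∏ i ∈ U, (x i + algebraMap F L μ)) * ∏ j ∈ V, (x j + algebraMap F L ν)) *
          ((algebraMap F L (ν - μ))⁻¹) ^ s /
        ((z + algebraMap F L μ) ^ a * (z + algebraMap F L ν) ^ 0)
      = ∑ J ∈ V.powerset,
          algebraMap F L (econst F (V.card - J.card) s 1) *
            ((∏ i ∈ U ∪ J, (x i + algebraMap F L μ)) / (z + algebraMap F L μ) ^ a) := by
    intro μ
    have := inner_sum x V μ s 1
    simp only [one_mul] at this
    calc ∑ ν ∈ (univ : Finset F).erase μ,
        ((∏ i ∈ U, (x i + algebraMap F L μ)) * ∏ j ∈ V, (x j + algebraMap F L ν)) *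
            ((algebraMap F L (ν - μ))⁻¹) ^ s /
          ((z + algebraMap F L μ) ^ a * (z + algebraMap F L ν) ^ 0)
        = ((∏ i ∈ U, (x i + algebraMap F L μ)) / (z + algebraMap F L μ) ^ a) *
            ∑ ν ∈ (univ : Finset F).erase μ,
              (∏ j ∈ V, (x j + algebraMap F L ν)) * ((algebraMap F L (ν - μ))⁻¹) ^ s := by
          rw [Finset.mul_sum]
          refine Finset.sum_congr rfl fun ν _ => ?_
          rw [pow_zero]
          ring
      _ = _ := by
          rw [this, Finset.mul_sum]
          refine Finset.sum_congr rfl fun J hJ => ?_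
          rw [Finset.prod_union (hdisj.mono_right (Finset.mem_powerset.mp hJ))]
          ring
  rw [Finset.sum_congr rfl (fun μ _ => key μ), Finset.sum_comm]
  refine Finset.sum_congr rfl fun J hJ => ?_
  rw [← hn J, map_natCast]
  unfold T
  exact (Finset.mul_sum _ _ _).symm

lemma rep_G_a0 (hdisj : Disjoint U V) (hUV : U ∪ V = S) {p : ℕ} (hp : p.Prime) [CharP F p]
    {b : ℕ} (hb : 1 ≤ b) (hbN : b ≤ N) (s : ℕ) : Rep F S N (G F U V 0 b s : (ι → L) → L → L) := by
  have hneg : ((-1 : F)) ^ p = -1 := by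
    haveI : ExpChar F p := .prime hp
    have := map_neg (frobenius F p) 1
    simpa [frobenius_def] using this
  have hex : ∀ J : Finset ι, ∃ n : ℕ, (n : F) = econst F (U.card - J.card) s (-1) :=
    fun J => econst_natCast hp _ _ hneg
  choose n hn using hex
  refine rep_congr (rep_sum (f := fun J x z => (n J : L) * T F x z (J ∪ V) b)
    (s := U.powerset) (fun J hJ => rep_single (n J)
      (Finset.mem_powerset.mpr (hUV ▸ Finset.union_subset_union_left
        (Finset.mem_powerset.mp hJ))) (Finset.mem_Icc.mpr ⟨hb, hbN⟩))) ?_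
  intro x z hz
  rw [G, sum_offDiag_right]
  have key : ∀ ν : F, ∑ μ ∈ (univ : Finset F).erase ν,
      ((∏ i ∈ U, (x i + algebraMap F L μ)) * ∏ j ∈ V, (x j + algebraMap F L ν)) *
          ((algebraMap F L (ν - μ))⁻¹) ^ s /
        ((z + algebraMap F L μ) ^ 0 * (z + algebraMap F L ν) ^ b)
      = ∑ J ∈ U.powerset,
          algebraMap F L (econst F (U.card - J.card) s (-1)) *
            ((∏ i ∈ J ∪ V, (x i + algebraMap F L ν)) / (z + algebraMap F L ν) ^ b) := by
    intro ν
    have := inner_sum x U ν s (-1)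
    have hsign : ∀ μ : F, (-1 : F) * (μ - ν) = ν - μ := fun μ => by ring
    simp only [hsign] at this
    calc ∑ μ ∈ (univ : Finset F).erase ν,
        ((∏ i ∈ U, (x i + algebraMap F L μ)) * ∏ j ∈ V, (x j + algebraMap F L ν)) *
            ((algebraMap F L (ν - μ))⁻¹) ^ s /
          ((z + algebraMap F L μ) ^ 0 * (z + algebraMap F L ν) ^ b)
        = ((∏ j ∈ V, (x j + algebraMap F L ν)) / (z + algebraMap F L ν) ^ b) *
            ∑ μ ∈ (univ : Finset F).erase ν,
              (∏ i ∈ U, (x i + algebraMap F L μ)) * ((algebraMap F L (ν - μ))⁻¹) ^ s := by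
          rw [Finset.mul_sum]
          refine Finset.sum_congr rfl fun μ _ => ?_
          rw [pow_zero]
          ring
      _ = _ := by
          rw [this, Finset.mul_sum]
          refine Finset.sum_congr rfl fun J hJ => ?_
          rw [Finset.prod_union (hdisj.mono_left (Finset.mem_powerset.mp hJ))]
          ring
  rw [Finset.sum_congr rfl (fun ν _ => key ν), Finset.sum_comm]
  refine Finset.sum_congr rfl fun J hJ => ?_
  rw [← hn J, map_natCast]
  unfold T
  exact (Finset.mul_sum _ _ _).symm

lemma rep_G_main (hdisj : Disjoint U V) (hUV : U ∪ V = S) {p : ℕ} (hp : p.Prime)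
    [CharP F p] [CharP L p] :
    ∀ m a b s : ℕ, a + b = m → 1 ≤ m → m ≤ N → Rep F S N (G F U V a b s : (ι → L) → L → L) := by
  intro m
  induction m with
  | zero => intro a b s _ h1 _; omega
  | succ m ih =>
    intro a b s hab h1 hmN
    match a, b with
    | 0, b => exact rep_G_a0 hdisj hUV hp (by omega) (by omega) s
    | a + 1, 0 => exact rep_G_b0 hdisj hUV hp (by omega) (by omega) s
    | a + 1, b + 1 =>
      have hm : 1 ≤ m := by omega
      have h1 := ih (a + 1) b (s + 1) (by omega) hm (by omega)
      have h2 := ih a (b + 1) (s + 1) (by omega) hm (by omega)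
      refine rep_congr (rep_sub hp h1 h2) ?_
      intro x z hz
      show G F U V (a + 1) (b + 1) s x z
        = G F U V (a + 1) b (s + 1) x z - G F U V a (b + 1) (s + 1) x z
      rw [G, G, G, ← Finset.sum_sub_distrib]
      refine Finset.sum_congr rfl fun μν hμν => ?_
      obtain ⟨μ, ν⟩ := μν
      rw [Finset.mem_offDiag] at hμν
      have hw1 : z + algebraMap F L μ ≠ 0 := z_add_ne hz μ
      have hw2 : z + algebraMap F L ν ≠ 0 := z_add_ne hz ν
      have hd : algebraMap F L (ν - μ) ≠ 0 := by
        rw [_root_.map_ne_zero]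
        exact sub_ne_zero.mpr (Ne.symm hμν.2.2)
      have hsub : algebraMap F L (ν - μ) = (z + algebraMap F L ν) - (z + algebraMap F L μ) := by
        rw [map_sub]; ring
      rw [hsub] at hd ⊢
      exact pf_step hw1 hw2 hd _ a b s

end Main

end Stmt6Aux

/-- Higher-weight partial-fraction decomposition with constants in the prime field
(the constants are encoded as natural-number casts, which exactly describe the
elements of the prime field `𝔽_p ⊆ L` since `L` has characteristic `p`). -/
theorem stmt_6 {F L ι : Type*} [Field F] [Fintype F] [DecidableEq F]
    [Field L] [Algebra F L] [DecidableEq ι]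
    (p q e : ℕ) (hp : p.Prime) (he : 0 < e) (hq : q = p ^ e) (hq2 : 2 < q)
    (hF : Fintype.card F = q)
    (S U V : Finset ι) (hdisj : Disjoint U V) (hUV : U ∪ V = S)
    (N α β : ℕ) (hα : 1 ≤ α) (hβ : 1 ≤ β) (hN : N = α + β) :
    ∃ c : Finset ι → ℕ → ℕ,
      ∀ (x : ι → L) (z : L), z ∉ Set.range (algebraMap F L) →
        ∑ μν ∈ (Finset.univ : Finset F).offDiag,
            ((∏ i ∈ U, (x i + algebraMap F L μν.1)) *
                ∏ j ∈ V, (x j + algebraMap F L μν.2)) /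
              ((z + algebraMap F L μν.1) ^ α * (z + algebraMap F L μν.2) ^ β) =
          ∑ I ∈ S.powerset, ∑ k ∈ Finset.Icc 1 N,
            (c I k : L) *
              ∑ μ : F, (∏ i ∈ I, (x i + algebraMap F L μ)) / (z + algebraMap F L μ) ^ k := by
  haveI hFp : CharP F p := Stmt6Aux.charF hp he (by rw [hF, hq])
  haveI hLp : CharP L p := charP_of_injective_algebraMap (algebraMap F L).injective p
  obtain ⟨c, hc⟩ := Stmt6Aux.rep_G_main (F := F) (L := L) (S := S) (N := N) hdisj hUV hp (α + β) α β 0 rfl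
    (by omega) (by omega)
  refine ⟨c, fun x z hz => ?_⟩
  have h := hc x z hz
  unfold Stmt6Aux.G at h
  simp only [pow_zero, mul_one] at h
  unfold Stmt6Aux.T at h
  exact h
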